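/- Perfect embezzlement is impossible in the commuting operator framework with a finite-dimensional resource space: if H is a finite-dimensional complex Hilbert space, then there do not exist a unit vector ψ ∈ H and families U, V : Fin 2 → Fin 2 → (H →L[ℂ] H) such that U and V are unitary operator matrices, the families U and V *-commute, and U, V satisfy the perfect embezzlement relations for ψ. -/

import Mathlib

open ContinuousLinearMap

/-- A family `U : Fin d → Fin d → (H →L[ℂ] H)` is a unitary operator matrix. -/
def IsUnitaryOpMatrix {H : Type*} [NormedAddCommGroup H] [InnerProductSpace ℂ H]
    [CompleteSpace H] {d : ℕ} (U : Fin d → Fin d → (H →L[ℂ] H)) : Prop :=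
  (∀ i j, ∑ k, (adjoint (U k i)) ∘L (U k j) = if i = j then (1 : H →L[ℂ] H) else 0) ∧
  (∀ i j, ∑ k, (U i k) ∘L (adjoint (U j k)) = if i = j then (1 : H →L[ℂ] H) else 0)

/-- Two families of bounded operators *-commute entrywise. -/
def StarCommuteFamilies {H : Type*} [NormedAddCommGroup H] [InnerProductSpace ℂ H]
    [CompleteSpace H] {d : ℕ} (U V : Fin d → Fin d → (H →L[ℂ] H)) : Prop :=
  ∀ i j k l, (U i j) ∘L (V k l) = (V k l) ∘L (U i j) ∧
    (adjoint (U i j)) ∘L (V k l) = (V k l) ∘L (adjoint (U i j))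

namespace NoEmbezzlementAux

variable {H : Type*} [NormedAddCommGroup H] [InnerProductSpace ℂ H]

local notation "⟪" x ", " y "⟫" => @inner ℂ _ _ x y

/-- Apply a word in the two operators `C`, `D` to a vector, innermost letter first. -/
def VW (C D : H →L[ℂ] H) : List Bool → H → H
  | [], x => x
  | false :: w, x => VW C D w (C x)
  | true :: w, x => VW C D w (D x)

lemma VW_comm (C D T : H →L[ℂ] H) (hC : ∀ x, T (C x) = C (T x))
    (hD : ∀ x, T (D x) = D (T x)) :
    ∀ (w : List Bool) (x : H), T (VW C D w x) = VW C D w (T x)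
  | [], _ => rfl
  | false :: w, x => by
    simp only [VW]; rw [VW_comm C D T hC hD w, hC]
  | true :: w, x => by
    simp only [VW]; rw [VW_comm C D T hC hD w, hD]

lemma VW_smul (C D : H →L[ℂ] H) (c : ℂ) :
    ∀ (w : List Bool) (x : H), VW C D w (c • x) = c • VW C D w x
  | [], _ => rfl
  | false :: w, x => by simp only [VW, map_smul]; exact VW_smul C D c w (C x)
  | true :: w, x => by simp only [VW, map_smul]; exact VW_smul C D c w (D x)

lemma VW_zero (C D : H →L[ℂ] H) :
    ∀ (w : List Bool), VW C D w (0 : H) = 0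
  | [] => rfl
  | false :: w => by simp only [VW, map_zero]; exact VW_zero C D w
  | true :: w => by simp only [VW, map_zero]; exact VW_zero C D w

/-- The key orthogonality computation. -/
lemma inner_VW (A B C D : H →L[ℂ] H) (ψ : H) (c : ℂ)
    (hsplit : ∀ x y : H, ⟪A x, A y⟫ + ⟪B x, B y⟫ = ⟪x, y⟫)
    (hAC : ∀ x, A (C x) = C (A x)) (hAD : ∀ x, A (D x) = D (A x))
    (hBC : ∀ x, B (C x) = C (B x)) (hBD : ∀ x, B (D x) = D (B x))
    (hψ : ⟪ψ, ψ⟫ = 1) (hc : (starRingEnd ℂ) c * c = 1 / 2)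
    (r00 : A (C ψ) = c • ψ) (r11 : B (D ψ) = c • ψ)
    (r01 : A (D ψ) = 0) (r10 : B (C ψ) = 0) :
    ∀ w w' : List Bool, w.length = w'.length →
      ⟪VW C D w ψ, VW C D w' ψ⟫ = if w = w' then ((1 : ℂ) / 2) ^ w.length else 0 := by
  intro w
  induction w with
  | nil =>
    intro w' hlen
    cases w' with
    | nil => simpa [VW] using hψ
    | cons b w' => simp at hlen
  | cons b w ih =>
    intro w' hlen
    cases w' with
    | nil => simp at hlen
    | cons b' w' =>
      have hlen' : w.length = w'.length := by simpa using hlen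
      cases b <;> cases b' <;>
        · simp only [VW]
          rw [← hsplit (VW C D w _) (VW C D w' _),
            VW_comm C D A hAC hAD, VW_comm C D A hAC hAD,
            VW_comm C D B hBC hBD, VW_comm C D B hBC hBD]
          simp only [r00, r11, r01, r10, VW_zero, VW_smul, inner_zero_left,
            inner_zero_right, add_zero, zero_add, inner_smul_left, inner_smul_right,
            ← mul_assoc, hc, ih w' hlen', List.cons.injEq]
          split_ifs with h <;>
            simp_all [pow_succ, mul_comm c ((starRingEnd ℂ) c)] <;> ring

end NoEmbezzlementAux

/-- Perfect embezzlement is impossible in the commuting operator framework when the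
resource space is finite dimensional. -/
theorem no_perfect_embezzlement_finite_dimensional
    {H : Type*} [NormedAddCommGroup H] [InnerProductSpace ℂ H]
    [FiniteDimensional ℂ H] :
    ¬ ∃ (ψ : H) (U V : Fin 2 → Fin 2 → (H →L[ℂ] H)),
      ‖ψ‖ = 1 ∧
      IsUnitaryOpMatrix U ∧ IsUnitaryOpMatrix V ∧
      StarCommuteFamilies U V ∧
      U 0 0 (V 0 0 ψ) = (1 / Real.sqrt 2 : ℂ) • ψ ∧
      U 1 0 (V 1 0 ψ) = (1 / Real.sqrt 2 : ℂ) • ψ ∧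
      U 0 0 (V 1 0 ψ) = 0 ∧
      U 1 0 (V 0 0 ψ) = 0 := by
  rintro ⟨ψ, U, V, hψ, hU, hV, hComm, h00, h11, h01, h10⟩
  open NoEmbezzlementAux in
  -- abbreviations
  set A : H →L[ℂ] H := U 0 0 with hA
  set B : H →L[ℂ] H := U 1 0 with hB
  set C : H →L[ℂ] H := V 0 0 with hC
  set D : H →L[ℂ] H := V 1 0 with hD
  set c : ℂ := (1 / Real.sqrt 2 : ℂ) with hcdef
  -- column isometry identity
  have hcol : adjoint A ∘L A + adjoint B ∘L B = 1 := by
    have h := hU.1 0 0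
    simpa [Fin.sum_univ_two] using h
  have hsplit : ∀ x y : H,
      (inner ℂ (A x) (A y) : ℂ) + inner ℂ (B x) (B y) = inner ℂ x y := by
    intro x y
    have h1 : (inner ℂ (A x) (A y) : ℂ) = inner ℂ x ((adjoint A ∘L A) y) := by
      rw [ContinuousLinearMap.comp_apply, ContinuousLinearMap.adjoint_inner_right]
    have h2 : (inner ℂ (B x) (B y) : ℂ) = inner ℂ x ((adjoint B ∘L B) y) := by
      rw [ContinuousLinearMap.comp_apply, ContinuousLinearMap.adjoint_inner_right]
    rw [h1, h2, ← inner_add_right]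
    have : (adjoint A ∘L A) y + (adjoint B ∘L B) y = ((adjoint A ∘L A + adjoint B ∘L B)) y := rfl
    rw [this, hcol]
    rfl
  -- commutation, pointwise
  have hcomm : ∀ i j k l : Fin 2, ∀ x : H, U i j (V k l x) = V k l (U i j x) := by
    intro i j k l x
    have h := (hComm i j k l).1
    have := DFunLike.congr_fun h x
    simpa using this
  -- scalar fact
  have hc : (starRingEnd ℂ) c * c = 1 / 2 := by
    rw [hcdef]
    rw [map_div₀, map_one, Complex.conj_ofReal, div_mul_div_comm, one_mul,
      ← Complex.ofReal_mul, Real.mul_self_sqrt (by norm_num : (0:ℝ) ≤ 2)]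
    norm_num
  have hψψ : (inner ℂ ψ ψ : ℂ) = 1 := by
    rw [inner_self_eq_norm_sq_to_K, hψ]
    norm_num
  -- the main orthogonality result
  have main := inner_VW A B C D ψ c hsplit
    (hcomm 0 0 0 0) (hcomm 0 0 1 0) (hcomm 1 0 0 0) (hcomm 1 0 1 0)
    hψψ hc h00 h11 h01 h10
  -- build, for each n, an orthonormal family indexed by (Fin n → Bool)
  have key : ∀ n : ℕ, 2 ^ n ≤ Module.finrank ℂ H := by
    intro n
    set e : (Fin n → Bool) → H :=
      fun u => ((Real.sqrt 2 : ℝ) : ℂ) ^ n • VW C D (List.ofFn u) ψ with he_def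
    have hs : ((Real.sqrt 2 : ℝ) : ℂ) ^ n * (((Real.sqrt 2 : ℝ) : ℂ) ^ n * ((1:ℂ)/2) ^ n) = 1 := by
      rw [← mul_assoc, ← mul_pow, ← mul_pow, ← Complex.ofReal_mul,
        Real.mul_self_sqrt (by norm_num : (0:ℝ) ≤ 2)]
      norm_num
    have he : Orthonormal ℂ e := by
      rw [orthonormal_iff_ite]
      intro u u'
      rw [he_def]
      simp only [inner_smul_left, inner_smul_right, map_pow, Complex.conj_ofReal]
      rw [main (List.ofFn u) (List.ofFn u') (by simp)]
      by_cases h : u = u'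
      · subst h
        simp only [if_pos rfl, List.length_ofFn]
        simpa using hs
      · have h2 : List.ofFn u ≠ List.ofFn u' := fun hh => h (List.ofFn_injective hh)
        simp [h, h2]
    have hle := he.linearIndependent.fintype_card_le_finrank
    simpa [Fintype.card_fun] using hle
  have h1 := key (Module.finrank ℂ H)
  have h2 := Nat.lt_two_pow_self (n := Module.finrank ℂ H)
  omega
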